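/- Let G be a finite cyclic group of order n with generator e, and let a ∈ [1,n] with gcd(a,n)=1. Suppose there exist positive integers c1, c2 with a = (n - c1)/c2 and such that d = (n - c1 - c2)/(c1·c2) is a positive integer. Then the minimum of the set of distances Δ(B({e, ae})) of the monoid of zero-sum sequences over {e, ae} equals d. -/
import Mathlib


open Multiset

section Defs

variable {G : Type*} [AddCommGroup G]

/-- `S` is a zero-sum sequence over `G0`. -/
def IsZeroSumSeq (G0 : Set G) (S : Multiset G) : Prop :=
  (∀ g ∈ S, g ∈ G0) ∧ S.sum = 0

/-- `S` is a minimal zero-sum sequence over `G0`. -/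
def IsMinZeroSum (G0 : Set G) (S : Multiset G) : Prop :=
  S ≠ 0 ∧ IsZeroSumSeq G0 S ∧
    ∀ T : Multiset G, T ≤ S → T ≠ 0 → T ≠ S → T.sum ≠ 0

/-- The set of lengths of factorizations of `B` into minimal zero-sum sequences over `G0`. -/
def LengthSet (G0 : Set G) (B : Multiset G) : Set ℕ :=
  { k | ∃ F : Multiset (Multiset G), F.card = k ∧ (∀ A ∈ F, IsMinZeroSum G0 A) ∧ F.sum = B }

/-- The set of successive distances of a set of naturals. -/
def DeltaOf (L : Set ℕ) : Set ℕ :=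
  { d | ∃ a ∈ L, ∃ b ∈ L, a < b ∧ b - a = d ∧ ∀ c ∈ L, ¬(a < c ∧ c < b) }

/-- The set of distances of the monoid of zero-sum sequences over `G0`. -/
def DeltaB (G0 : Set G) : Set ℕ :=
  ⋃ B ∈ { B : Multiset G | IsZeroSumSeq G0 B }, DeltaOf (LengthSet G0 B)

/-- Minimal distance, with the convention `min ∅ = 0`. -/
noncomputable def minDelta (G0 : Set G) : ℕ := sInf (DeltaB G0)

/-- Cross number of a sequence. -/
noncomputable def crossNum (S : Multiset G) : ℚ :=
  (S.map fun g => (1 : ℚ) / (addOrderOf g : ℚ)).sum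

/-- `G0` is weakly half-factorial. -/
def WeaklyHF (G0 : Set G) : Prop :=
  ∀ A : Multiset G, IsMinZeroSum G0 A → ∃ m : ℕ, crossNum A = (m : ℚ)

/-- `G0` is half-factorial. -/
def HalfFactorial (G0 : Set G) : Prop :=
  ∀ B : Multiset G, IsZeroSumSeq G0 B →
    ∀ k ∈ LengthSet G0 B, ∀ l ∈ LengthSet G0 B, k = l

end Defs

section Aux


variable {G : Type*} [AddCommGroup G] [DecidableEq G]

lemma seq_struct (e gg : G) (hne : gg ≠ e) (S : Multiset G)
    (hS : ∀ z ∈ S, z = e ∨ z = gg) :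
    S.sum = (S.count e) • e + (S.count gg) • gg ∧ S.card = S.count e + S.count gg := by
  induction S using Multiset.induction with
  | empty => simp
  | cons z S ih =>
    obtain ⟨h1, h2⟩ := ih (fun w hw => hS w (mem_cons_of_mem hw))
    rcases hS z (mem_cons_self z S) with rfl | rfl
    · constructor
      · rw [sum_cons, h1, count_cons_self, count_cons_of_ne hne, succ_nsmul]
        abel
      · rw [card_cons, count_cons_self, count_cons_of_ne hne, h2]
        omega
    · constructor
      · rw [sum_cons, h1, count_cons_self, count_cons_of_ne (Ne.symm hne), succ_nsmul]
        abel
      · rw [card_cons, count_cons_self, count_cons_of_ne (Ne.symm hne), h2]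
        omega

lemma sum_zero_iff (e : G) (n a : ℕ) (he : addOrderOf e = n) (hne : a • e ≠ e)
    (S : Multiset G) (hS : ∀ z ∈ S, z = e ∨ z = a • e) :
    S.sum = 0 ↔ n ∣ S.count e + a * S.count (a • e) := by
  obtain ⟨h1, -⟩ := seq_struct e (a • e) hne S hS
  rw [h1, show (S.count (a • e)) • (a • e) = (a * S.count (a • e)) • e from (mul_nsmul e a _).symm,
    ← add_nsmul, ← addOrderOf_dvd_iff_nsmul_eq_zero, he]

lemma ystar_eq (n a c1 c2 d x y : ℕ) (hn : n = d * c1 * c2 + c1 + c2)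
    (ha : a = d * c1 + 1) (hc1 : 0 < c1) (hc2 : 0 < c2)
    (hgcd : Nat.gcd a n = 1)
    (hx : x < c1) (hy1 : 1 ≤ y) (hyn : y ≤ n) (hdvd : n ∣ x + a * y) :
    x + a * y = (d * (c1 - x) + 1) * n ∧ y = (d * (c1 - x) + 1) * c2 + (c1 - x) := by
  obtain ⟨s, hxs⟩ : ∃ s, c1 = x + s := ⟨c1 - x, by omega⟩
  have hs1 : 1 ≤ s := by omega
  have hcx : c1 - x = s := by omega
  rw [hcx]
  have key : x + a * ((d * s + 1) * c2 + s) = (d * s + 1) * n := by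
    subst hxs; subst ha; subst hn; ring
  have hysn : (d * s + 1) * c2 + s ≤ n := by
    have h1 : d * s ≤ d * c1 := Nat.mul_le_mul_left d (by omega)
    have h2 : d * s * c2 ≤ d * c1 * c2 := Nat.mul_le_mul_right c2 h1
    have hexp : (d * s + 1) * c2 = d * s * c2 + c2 := by ring
    omega
  have hcop : Nat.Coprime n a := Nat.Coprime.symm hgcd
  have hdvd2 : n ∣ x + a * ((d * s + 1) * c2 + s) := ⟨d * s + 1, by rw [key, mul_comm]⟩
  have hyeq : y = (d * s + 1) * c2 + s := by
    rcases le_total y ((d * s + 1) * c2 + s) with hle | hle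
    · have hd3 : n ∣ (x + a * ((d * s + 1) * c2 + s)) - (x + a * y) :=
        Nat.dvd_sub hdvd2 hdvd
      rw [Nat.add_sub_add_left, ← Nat.mul_sub] at hd3
      have hd4 : n ∣ ((d * s + 1) * c2 + s) - y := hcop.dvd_of_dvd_mul_left hd3
      have := Nat.eq_zero_of_dvd_of_lt hd4 (by omega)
      omega
    · have hd3 : n ∣ (x + a * y) - (x + a * ((d * s + 1) * c2 + s)) :=
        Nat.dvd_sub hdvd hdvd2
      rw [Nat.add_sub_add_left, ← Nat.mul_sub] at hd3
      have hd4 : n ∣ y - ((d * s + 1) * c2 + s) := hcop.dvd_of_dvd_mul_left hd3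
      have := Nat.eq_zero_of_dvd_of_lt hd4 (by omega)
      omega
  exact ⟨by rw [hyeq]; exact key, hyeq⟩

end Aux

section Aux2

variable {G : Type*} [AddCommGroup G] [DecidableEq G]

lemma repl_le (S : Multiset G) (c : ℕ) (w : G) (hc : c ≤ S.count w) :
    replicate c w ≤ S := by
  rw [le_iff_count]
  intro z
  rw [count_replicate]
  split
  · next h => exact h ▸ hc
  · exact Nat.zero_le _

lemma pair_le (S : Multiset G) (e gg : G) (hne : gg ≠ e) (p q : ℕ)
    (hp : p ≤ S.count e) (hq : q ≤ S.count gg) :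
    replicate p e + replicate q gg ≤ S := by
  rw [le_iff_count]
  intro z
  rw [count_add, count_replicate, count_replicate]
  by_cases hz1 : z = e
  · subst hz1
    rw [if_pos rfl, if_neg hne]
    simpa using hp
  · by_cases hz2 : z = gg
    · subst hz2
      rw [if_neg (fun h => hz1 h.symm), if_pos rfl]
      simpa using hq
    · rw [if_neg (fun h => hz1 h.symm), if_neg (fun h => hz2 h.symm)]
      exact Nat.zero_le _

lemma count_pair_e (e gg : G) (hne : gg ≠ e) (p q : ℕ) :
    (replicate p e + replicate q gg).count e = p := by
  rw [count_add, count_replicate, count_replicate, if_pos rfl, if_neg hne]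
  omega

lemma count_pair_g (e gg : G) (hne : gg ≠ e) (p q : ℕ) :
    (replicate p e + replicate q gg).count gg = q := by
  rw [count_add, count_replicate, count_replicate, if_pos rfl, if_neg (Ne.symm hne)]
  omega

lemma pair_mem (e gg : G) (p q : ℕ) (z : G) (hz : z ∈ replicate p e + replicate q gg) :
    z = e ∨ z = gg := by
  rcases mem_add.mp hz with h | h
  · exact Or.inl (eq_of_mem_replicate h)
  · exact Or.inr (eq_of_mem_replicate h)

lemma pair_sum_zero (e : G) (n a : ℕ) (he : addOrderOf e = n) (p q : ℕ)
    (hdvd : n ∣ p + a * q) :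
    (replicate p e + replicate q (a • e)).sum = 0 := by
  rw [sum_add, sum_replicate, sum_replicate,
    show q • (a • e) = (a * q) • e from (mul_nsmul e a q).symm, ← add_nsmul]
  exact addOrderOf_dvd_iff_nsmul_eq_zero.mp (he ▸ hdvd)

lemma atom_weight (e : G) (n a c1 c2 d : ℕ) (he : addOrderOf e = n) (hne : a • e ≠ e)
    (hn : n = d * c1 * c2 + c1 + c2) (ha : a = d * c1 + 1)
    (hc1 : 0 < c1) (hc2 : 0 < c2) (hgcd : Nat.gcd a n = 1)
    (S : Multiset G) (hS : IsMinZeroSum ({e, a • e} : Set G) S) :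
    ∃ j, S.count e + a * S.count (a • e) = (d * j + 1) * n := by
  obtain ⟨hS0, ⟨hSmem, hSsum⟩, hSmin⟩ := hS
  have hSmem' : ∀ z ∈ S, z = e ∨ z = a • e := by
    intro z hz
    simpa [Set.mem_insert_iff] using hSmem z hz
  have npos : 0 < n := by
    have : 0 < c1 + c2 := by omega
    omega
  have hapos : 0 < a := by omega
  have hdvd : n ∣ S.count e + a * S.count (a • e) :=
    (sum_zero_iff e n a he hne S hSmem').mp hSsum
  have hrne0 : (replicate n e : Multiset G) ≠ 0 := by
    intro h
    have := congrArg card h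
    simp at this
    omega
  have hrne0' : (replicate n (a • e) : Multiset G) ≠ 0 := by
    intro h
    have := congrArg card h
    simp at this
    omega
  have hsre : (replicate n e : Multiset G).sum = 0 := by
    rw [sum_replicate, ← he]
    exact addOrderOf_dvd_iff_nsmul_eq_zero.mp dvd_rfl
  have hsrg : (replicate n (a • e) : Multiset G).sum = 0 := by
    rw [sum_replicate, show n • (a • e) = (a * n) • e from (mul_nsmul e a n).symm]
    exact addOrderOf_dvd_iff_nsmul_eq_zero.mp (he ▸ dvd_mul_left n a)
  obtain ⟨-, hcard⟩ := seq_struct e (a • e) hne S hSmem'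
  have hSpos : 0 < S.count e + S.count (a • e) := by
    have := Multiset.card_pos.mpr hS0
    omega
  have hyle : S.count (a • e) ≤ n := by
    by_contra hgt
    push_neg at hgt
    refine hSmin (replicate n (a • e)) (repl_le S n (a • e) hgt.le) hrne0' ?_ hsrg
    intro hEq
    have := congrArg (count (a • e)) hEq
    rw [count_replicate, if_pos rfl] at this
    omega
  -- main case analysis
  by_cases hy0 : S.count (a • e) = 0
  · -- y = 0 : x = n
    rw [hy0] at hdvd ⊢
    simp only [Nat.mul_zero, Nat.add_zero] at hdvd ⊢
    have hxle : S.count e ≤ n := by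
      by_contra hgt
      push_neg at hgt
      refine hSmin (replicate n e) (repl_le S n e hgt.le) hrne0 ?_ hsre
      intro hEq
      have := congrArg (count e) hEq
      rw [count_replicate, if_pos rfl] at this
      omega
    have hxpos : 0 < S.count e := by omega
    have := Nat.le_of_dvd hxpos hdvd
    refine ⟨0, ?_⟩
    omega
  · have hy1 : 1 ≤ S.count (a • e) := by omega
    have hxltn : S.count e < n := by
      by_contra hgt
      push_neg at hgt
      refine hSmin (replicate n e) (repl_le S n e hgt) hrne0 ?_ hsre
      intro hEq
      have := congrArg (count (a • e)) hEq
      rw [count_replicate, if_neg (Ne.symm hne)] at this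
      omega
    by_cases hxc : S.count e < c1
    · obtain ⟨h1, -⟩ := ystar_eq n a c1 c2 d _ _ hn ha hc1 hc2 hgcd hxc hy1 hyle hdvd
      exact ⟨c1 - S.count e, h1⟩
    · push_neg at hxc
      have hacn : a * c2 + c1 = n := by rw [ha, hn]; ring
      by_cases hyc : S.count (a • e) < c2
      · -- m = 1
        obtain ⟨m, hm⟩ := hdvd
        have hay : a * S.count (a • e) + a ≤ a * c2 := by
          have h := Nat.mul_le_mul_left a (show S.count (a • e) + 1 ≤ c2 by omega)
          have : a * (S.count (a • e) + 1) = a * S.count (a • e) + a := by ring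
          omega
        rcases m with - | - | m
        · have : a ≤ a * S.count (a • e) := Nat.le_mul_of_pos_right a hy1
          omega
        · exact ⟨0, by rw [hm]; ring⟩
        · exfalso
          have h2 : n * 2 ≤ n * (m + 1 + 1) := Nat.mul_le_mul_left n (by omega)
          omega
      · -- U1 ≤ S, so S = U1
        push_neg at hyc
        have hU1le : replicate c1 e + replicate c2 (a • e) ≤ S :=
          pair_le S e (a • e) hne c1 c2 hxc hyc
        have hU1ne0 : (replicate c1 e + replicate c2 (a • e) : Multiset G) ≠ 0 := by
          intro h
          have := congrArg card h
          simp at this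
          omega
        have hU1sum : (replicate c1 e + replicate c2 (a • e) : Multiset G).sum = 0 :=
          pair_sum_zero e n a he c1 c2 ⟨1, by omega⟩
        have hU1S : replicate c1 e + replicate c2 (a • e) = S := by
          by_contra hneq
          exact hSmin _ hU1le hU1ne0 hneq hU1sum
        have hxe : S.count e = c1 := by
          rw [← hU1S]
          exact count_pair_e e (a • e) hne c1 c2
        have hyg : S.count (a • e) = c2 := by
          rw [← hU1S]
          exact count_pair_g e (a • e) hne c1 c2
        refine ⟨0, ?_⟩
        rw [hxe, hyg]
        omega

end Aux2

section Aux3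

variable {G : Type*} [AddCommGroup G] [DecidableEq G]

lemma fact_sum (e : G) (n a c1 c2 d : ℕ) (he : addOrderOf e = n) (hne : a • e ≠ e)
    (hn : n = d * c1 * c2 + c1 + c2) (ha : a = d * c1 + 1)
    (hc1 : 0 < c1) (hc2 : 0 < c2) (hgcd : Nat.gcd a n = 1)
    (F : Multiset (Multiset G)) (hF : ∀ A ∈ F, IsMinZeroSum ({e, a • e} : Set G) A) :
    ∃ J : ℕ, F.sum.count e + a * F.sum.count (a • e) = (F.card + d * J) * n := by
  induction F using Multiset.induction with
  | empty => exact ⟨0, by simp⟩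
  | cons A F ih =>
    obtain ⟨J, hJ⟩ := ih (fun B hB => hF B (mem_cons_of_mem hB))
    obtain ⟨j, hj⟩ := atom_weight e n a c1 c2 d he hne hn ha hc1 hc2 hgcd A
      (hF A (mem_cons_self A F))
    refine ⟨j + J, ?_⟩
    rw [sum_cons, count_add, count_add, card_cons]
    have hexp : (card F + 1 + d * (j + J)) * n = (d * j + 1) * n + (card F + d * J) * n := by
      ring
    rw [hexp, ← hj, ← hJ]
    ring

lemma length_congr (e : G) (n a c1 c2 d : ℕ) (he : addOrderOf e = n) (hne : a • e ≠ e)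
    (hn : n = d * c1 * c2 + c1 + c2) (ha : a = d * c1 + 1)
    (hc1 : 0 < c1) (hc2 : 0 < c2) (hgcd : Nat.gcd a n = 1)
    (B : Multiset G) (k k' : ℕ)
    (hk : k ∈ LengthSet ({e, a • e} : Set G) B) (hk' : k' ∈ LengthSet ({e, a • e} : Set G) B) :
    ∃ J J' : ℕ, k + d * J = k' + d * J' := by
  obtain ⟨F, hFc, hFa, hFs⟩ := hk
  obtain ⟨F', hFc', hFa', hFs'⟩ := hk'
  obtain ⟨J, hJ⟩ := fact_sum e n a c1 c2 d he hne hn ha hc1 hc2 hgcd F hFa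
  obtain ⟨J', hJ'⟩ := fact_sum e n a c1 c2 d he hne hn ha hc1 hc2 hgcd F' hFa'
  rw [hFs, hFc] at hJ
  rw [hFs', hFc'] at hJ'
  have npos : 0 < n := by
    have : 0 < c1 + c2 := by omega
    omega
  have : (k + d * J) * n = (k' + d * J') * n := by omega
  exact ⟨J, J', Nat.eq_of_mul_eq_mul_right npos this⟩

lemma isMin_pair (e : G) (n a : ℕ) (he : addOrderOf e = n) (hne : a • e ≠ e)
    (p q : ℕ) (hpq : 0 < p + q) (hsum : n ∣ p + a * q)
    (hmin : ∀ x y : ℕ, x ≤ p → y ≤ q → 0 < x + y → n ∣ x + a * y → x = p ∧ y = q) :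
    IsMinZeroSum ({e, a • e} : Set G) (replicate p e + replicate q (a • e)) := by
  have hcard : (replicate p e + replicate q (a • e)).card = p + q := by simp
  refine ⟨?_, ⟨?_, ?_⟩, ?_⟩
  · intro h0
    rw [h0] at hcard
    simp at hcard
    omega
  · intro z hz
    rcases pair_mem e (a • e) p q z hz with rfl | rfl
    · exact Set.mem_insert _ _
    · exact Set.mem_insert_of_mem _ rfl
  · exact pair_sum_zero e n a he p q hsum
  · intro T hTle hT0 hTS hTsum
    have hTmem : ∀ z ∈ T, z = e ∨ z = a • e :=
      fun z hz => pair_mem e (a • e) p q z (mem_of_le hTle hz)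
    have hx := count_le_of_le e hTle
    have hy := count_le_of_le (a • e) hTle
    rw [count_pair_e e (a • e) hne p q] at hx
    rw [count_pair_g e (a • e) hne p q] at hy
    obtain ⟨-, hcT⟩ := seq_struct e (a • e) hne T hTmem
    have hTpos : 0 < T.count e + T.count (a • e) := by
      have := Multiset.card_pos.mpr hT0
      omega
    have hdvdT : n ∣ T.count e + a * T.count (a • e) :=
      (sum_zero_iff e n a he hne T hTmem).mp hTsum
    obtain ⟨hxe, hye⟩ := hmin _ _ hx hy hTpos hdvdT
    refine hTS (Multiset.eq_of_le_of_card_le hTle ?_)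
    rw [hcard, hcT, hxe, hye]

lemma repl_pair_eq (e gg : G) (c1 c2 d a : ℕ) (hc1 : 0 < c1) (hc2 : 0 < c2)
    (ha : a = d * c1 + 1) :
    (replicate (c1 - 1) e + replicate ((d + 1) * c2 + 1) gg)
      + (replicate (c1 + a) e + replicate (c2 - 1) gg)
      = replicate ((d + 2) * c1) e + replicate ((d + 2) * c2) gg := by
  obtain ⟨c1', rfl⟩ : ∃ k, c1 = k + 1 := ⟨c1 - 1, by omega⟩
  obtain ⟨c2', rfl⟩ : ∃ k, c2 = k + 1 := ⟨c2 - 1, by omega⟩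
  subst ha
  rw [add_add_add_comm, ← replicate_add, ← replicate_add]
  have h1 : c1' + 1 - 1 + (c1' + 1 + (d * (c1' + 1) + 1)) = (d + 2) * (c1' + 1) := by
    rw [Nat.add_sub_cancel]
    ring
  have h2 : (d + 1) * (c2' + 1) + 1 + (c2' + 1 - 1) = (d + 2) * (c2' + 1) := by
    rw [Nat.add_sub_cancel]
    ring
  rw [h1, h2]

end Aux3

/-- In a cyclic group of order `n` with generator `e`, for
`a ∈ [1,n]` coprime to `n` with `a = (n-c1)/c2` and `d = (n-c1-c2)/(c1·c2)`
a positive integer, the minimum of the set of distances of the monoid of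
zero-sum sequences over `{e, a•e}` equals `d`. -/
theorem stmt_1 {G : Type*} [AddCommGroup G] [Fintype G] (n : ℕ)
    (hcard : Fintype.card G = n) (e : G) (he : addOrderOf e = n)
    (a : ℕ) (ha1 : 1 ≤ a) (han : a ≤ n) (hgcd : Nat.gcd a n = 1)
    (c1 c2 d : ℕ) (hc1 : 0 < c1) (hc2 : 0 < c2) (hd : 0 < d)
    (hac : a * c2 = n - c1) (hcn : c1 + c2 < n)
    (hdd : d * (c1 * c2) = n - c1 - c2) :
    minDelta ({e, a • e} : Set G) = d := by
  classical
  -- basic arithmetic consequences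
  have hassoc : d * (c1 * c2) = d * c1 * c2 := by ring
  have hn' : n = d * c1 * c2 + c1 + c2 := by omega
  have hnc1 : n - c1 = d * c1 * c2 + c2 := by omega
  have ha' : a = d * c1 + 1 := by
    have h1 : a * c2 = (d * c1 + 1) * c2 := by rw [hac, hnc1]; ring
    exact Nat.eq_of_mul_eq_mul_right hc2 h1
  have npos : 0 < n := by omega
  have hapos : 0 < a := ha1
  have hacn : a * c2 + c1 = n := by rw [ha', hn']; ring
  have hane : a • e ≠ e := by
    intro h
    have h2 : a = (a - 1) + 1 := by omega
    have h3 : ((a - 1) + 1) • e = e := by rw [← h2, h]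
    rw [add_nsmul, one_nsmul] at h3
    have h4 : (a - 1) • e = 0 := add_eq_right.mp h3
    have h5 : n ∣ a - 1 := by
      rw [← he]
      exact addOrderOf_dvd_iff_nsmul_eq_zero.mpr h4
    have hdc : 0 < d * c1 := Nat.mul_pos hd hc1
    have h6 : 0 < a - 1 := by omega
    exact absurd (Nat.le_of_dvd h6 h5) (by omega)
  -- minimality arithmetic for the three atoms
  have hminU1 : ∀ x y : ℕ, x ≤ c1 → y ≤ c2 → 0 < x + y → n ∣ x + a * y →
      x = c1 ∧ y = c2 := by
    intro x y hxp hyq hpos hdvd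
    obtain ⟨m, hm⟩ := hdvd
    have h1 : a * y ≤ a * c2 := Nat.mul_le_mul_left a hyq
    have h2 : y ≤ a * y := Nat.le_mul_of_pos_left y hapos
    rcases m with - | - | m
    · omega
    · have h4 : a * (c2 - y) ≤ c1 := by rw [Nat.mul_sub]; omega
      have h5 : c1 < a := by
        have hcd : c1 * 1 ≤ c1 * d := Nat.mul_le_mul_left c1 hd
        have hcomm : c1 * d = d * c1 := by ring
        omega
      have h6 : y = c2 := by
        by_contra hne'
        have hyy : 1 ≤ c2 - y := by omega
        have : a ≤ a * (c2 - y) := Nat.le_mul_of_pos_right a hyy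
        omega
      have h7 : a * y = a * c2 := by rw [h6]
      omega
    · exfalso
      have : n * 2 ≤ n * (m + 1 + 1) := Nat.mul_le_mul_left n (by omega)
      omega
  have hminA : ∀ x y : ℕ, x ≤ c1 + a → y ≤ c2 - 1 → 0 < x + y → n ∣ x + a * y →
      x = c1 + a ∧ y = c2 - 1 := by
    intro x y hxp hyq hpos hdvd
    obtain ⟨m, hm⟩ := hdvd
    have hq' : a * (c2 - 1) + a = a * c2 := by
      rw [Nat.mul_sub]
      have : a ≤ a * c2 := Nat.le_mul_of_pos_right a hc2
      omega
    have h1 : a * y ≤ a * (c2 - 1) := Nat.mul_le_mul_left a hyq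
    have h2 : y ≤ a * y := Nat.le_mul_of_pos_left y hapos
    rcases m with - | - | m
    · omega
    · have h3 : a * (c2 - 1) ≤ a * y := by omega
      have h4 : c2 - 1 ≤ y := Nat.le_of_mul_le_mul_left h3 hapos
      have h5 : y = c2 - 1 := by omega
      have h6 : a * y = a * (c2 - 1) := by rw [h5]
      omega
    · exfalso
      have : n * 2 ≤ n * (m + 1 + 1) := Nat.mul_le_mul_left n (by omega)
      omega
  have hminB1 : ∀ x y : ℕ, x ≤ c1 - 1 → y ≤ (d + 1) * c2 + 1 → 0 < x + y →
      n ∣ x + a * y → x = c1 - 1 ∧ y = (d + 1) * c2 + 1 := by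
    intro x y hxp hyq hpos hdvd
    have hxc : x < c1 := by omega
    by_cases hy0 : y = 0
    · exfalso
      rw [hy0] at hdvd
      simp only [Nat.mul_zero, Nat.add_zero] at hdvd
      have : n ≤ x := Nat.le_of_dvd (by omega) hdvd
      omega
    · have hy1 : 1 ≤ y := by omega
      have hyn : y ≤ n := by
        have h1 : d * c2 * 1 ≤ d * c2 * c1 := Nat.mul_le_mul_left _ hc1
        have e1 : d * c2 * c1 = d * c1 * c2 := by ring
        have h2 : (d + 1) * c2 = d * c2 + c2 := by ring
        omega
      obtain ⟨h1, h2⟩ := ystar_eq n a c1 c2 d x y hn' ha' hc1 hc2 hgcd hxc hy1 hyn hdvd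
      have hs1 : 1 ≤ c1 - x := by omega
      have hsone : c1 - x = 1 := by
        by_contra hs2'
        have hs2 : 2 ≤ c1 - x := by omega
        have h4 : (d * 2 + 1) * c2 ≤ (d * (c1 - x) + 1) * c2 :=
          Nat.mul_le_mul_right c2 (by
            have : d * 2 ≤ d * (c1 - x) := Nat.mul_le_mul_left d hs2
            omega)
        have h5 : (d * 2 + 1) * c2 = d * c2 + d * c2 + c2 := by ring
        have h6 : (d + 1) * c2 = d * c2 + c2 := by ring
        have h8 : 0 < d * c2 := Nat.mul_pos hd hc2
        omega
      rw [hsone] at h2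
      have h7 : (d * 1 + 1) * c2 = (d + 1) * c2 := by ring
      omega
  -- the three atoms
  have hU1 : IsMinZeroSum ({e, a • e} : Set G) (replicate c1 e + replicate c2 (a • e)) :=
    isMin_pair e n a he hane c1 c2 (by omega) ⟨1, by omega⟩ hminU1
  have hAsum : (c1 + a) + a * (c2 - 1) = n * 1 := by
    have hq' : a * (c2 - 1) + a = a * c2 := by
      rw [Nat.mul_sub]
      have : a ≤ a * c2 := Nat.le_mul_of_pos_right a hc2
      omega
    omega
  have hA : IsMinZeroSum ({e, a • e} : Set G)
      (replicate (c1 + a) e + replicate (c2 - 1) (a • e)) :=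
    isMin_pair e n a he hane _ _ (by omega) ⟨1, hAsum⟩ hminA
  have hB1sum : (c1 - 1) + a * ((d + 1) * c2 + 1) = n * (d + 1) := by
    obtain ⟨c1', hc1e⟩ : ∃ k, c1 = k + 1 := ⟨c1 - 1, by omega⟩
    rw [ha', hn', hc1e, Nat.add_sub_cancel]
    ring
  have hB1 : IsMinZeroSum ({e, a • e} : Set G)
      (replicate (c1 - 1) e + replicate ((d + 1) * c2 + 1) (a • e)) :=
    isMin_pair e n a he hane _ _ (by omega) ⟨d + 1, hB1sum⟩ hminB1
  -- the witness zero-sum sequence B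
  have hBsum : (d + 2) * c1 + a * ((d + 2) * c2) = n * (d + 2) := by
    rw [ha', hn']
    ring
  have hBzs : IsZeroSumSeq ({e, a • e} : Set G)
      (replicate ((d + 2) * c1) e + replicate ((d + 2) * c2) (a • e)) := by
    constructor
    · intro z hz
      rcases pair_mem e (a • e) _ _ z hz with rfl | rfl
      · exact Set.mem_insert _ _
      · exact Set.mem_insert_of_mem _ rfl
    · exact pair_sum_zero e n a he _ _ ⟨d + 2, hBsum⟩
  -- two factorization lengths
  have h2mem : 2 ∈ LengthSet ({e, a • e} : Set G)
      (replicate ((d + 2) * c1) e + replicate ((d + 2) * c2) (a • e)) := by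
    refine ⟨(replicate (c1 - 1) e + replicate ((d + 1) * c2 + 1) (a • e)) ::ₘ
      {replicate (c1 + a) e + replicate (c2 - 1) (a • e)}, by simp, ?_, ?_⟩
    · intro A hA'
      rcases mem_cons.mp hA' with rfl | hA''
      · exact hB1
      · rw [mem_singleton.mp hA'']
        exact hA
    · rw [sum_cons, sum_singleton]
      exact repl_pair_eq e (a • e) c1 c2 d a hc1 hc2 ha'
  have hd2mem : d + 2 ∈ LengthSet ({e, a • e} : Set G)
      (replicate ((d + 2) * c1) e + replicate ((d + 2) * c2) (a • e)) := by
    refine ⟨replicate (d + 2) (replicate c1 e + replicate c2 (a • e)), by simp, ?_, ?_⟩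
    · intro A hA'
      rw [eq_of_mem_replicate hA']
      exact hU1
    · rw [sum_replicate, smul_add, nsmul_replicate, nsmul_replicate]
  -- d is an attained distance
  have hdmemDelta : d ∈ DeltaOf (LengthSet ({e, a • e} : Set G)
      (replicate ((d + 2) * c1) e + replicate ((d + 2) * c2) (a • e))) := by
    refine ⟨2, h2mem, d + 2, hd2mem, by omega, by omega, ?_⟩
    intro c hcmem hcon
    obtain ⟨J, J', hJJ⟩ := length_congr e n a c1 c2 d he hane hn' ha' hc1 hc2 hgcd
      _ c 2 hcmem h2mem
    have h1 : d * J < d * J' := by omega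
    have h2 : J < J' := Nat.lt_of_mul_lt_mul_left h1
    have h3 : d * (J + 1) ≤ d * J' := Nat.mul_le_mul_left d h2
    have h4 : d * (J + 1) = d * J + d := by ring
    omega
  have hdmem : d ∈ DeltaB ({e, a • e} : Set G) := by
    show d ∈ ⋃ B ∈ { B : Multiset G | IsZeroSumSeq ({e, a • e} : Set G) B },
      DeltaOf (LengthSet ({e, a • e} : Set G) B)
    exact Set.mem_iUnion₂.mpr ⟨_, hBzs, hdmemDelta⟩
  -- lower bound
  have hlb : ∀ t ∈ DeltaB ({e, a • e} : Set G), d ≤ t := by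
    intro t ht
    have ht' : t ∈ ⋃ B ∈ { B : Multiset G | IsZeroSumSeq ({e, a • e} : Set G) B },
      DeltaOf (LengthSet ({e, a • e} : Set G) B) := ht
    obtain ⟨B', hB', htD⟩ := Set.mem_iUnion₂.mp ht'
    obtain ⟨u, hu, v, hv, huv, hvu, -⟩ := htD
    obtain ⟨J, J', hJJ⟩ := length_congr e n a c1 c2 d he hane hn' ha' hc1 hc2 hgcd
      B' v u hv hu
    have h1 : d * J < d * J' := by omega
    have h2 : J < J' := Nat.lt_of_mul_lt_mul_left h1
    have h3 : d * (J + 1) ≤ d * J' := Nat.mul_le_mul_left d h2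
    have h4 : d * (J + 1) = d * J + d := by ring
    omega
  show sInf (DeltaB ({e, a • e} : Set G)) = d
  exact le_antisymm (Nat.sInf_le hdmem) (le_csInf ⟨d, hdmem⟩ hlb)
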